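/- arXiv:1509.05734 — 2 statements merged into one kernel-verified Lean document; each statement's English description precedes it below -/
import Mathlib

section
/- Let n ≥ 2, T ∈ (0, ∞], f : [0,T) → ℝ continuously differentiable, and let x : [0,T) → ℝ be differentiable with x(0) ≤ -δ for some δ > 0 and x' ≤ -x² - 2x f'/(n-1) wherever x < 0. Define s(t) = ∫₀ᵗ e^{-2f(τ)/(n-1)} dτ. Then x(t) < 0 for all t ∈ [0,T), and for all t ∈ [0,T) with s(t) < (1/δ)e^{-2f(0)/(n-1)} one has x(t) ≤ -e^{-2f(t)/(n-1)} / ((1/δ)e^{-2f(0)/(n-1)} - s(t)). In particular, if s(t) → ∞ as t → T, then x(t) → -∞ as t approaches some t_p ≤ T with s(t_p) = (1/δ)e^{-2f(0)/(n-1)}. -/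
open Real Filter

private lemma keyA' (x g s c : ℝ → ℝ) (b : ℝ)
    (hgpos : ∀ u, 0 < g u)
    (hg : ∀ u, HasDerivAt g (c u * g u) u)
    (hs : ∀ u, HasDerivAt s (g u) u)
    (hs0 : s 0 = 0)
    (hx : ∀ u ∈ Set.Icc (0:ℝ) b, DifferentiableAt ℝ x u)
    (hxneg : ∀ u ∈ Set.Icc (0:ℝ) b, x u < 0)
    (hx'' : ∀ u ∈ Set.Icc (0:ℝ) b, deriv x u ≤ -(x u)^2 + c u * x u) :
    ∀ t ∈ Set.Icc (0:ℝ) b, g 0 / x 0 + s t ≤ g t / x t := by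
  intro t ht
  have hb : (0:ℝ) ≤ b := le_trans ht.1 ht.2
  have main : ∀ u ∈ Set.Icc (0:ℝ) b,
      HasDerivAt (fun v => g v / x v - s v)
        ((c u * g u * x u - g u * deriv x u) / (x u)^2 - g u) u ∧
      0 ≤ (c u * g u * x u - g u * deriv x u) / (x u)^2 - g u := by
    intro u hu
    have hxu := hxneg u hu
    have hdx := (hx u hu).hasDerivAt
    have hdiv := (hg u).div hdx (ne_of_lt hxu)
    refine ⟨hdiv.sub (hs u), ?_⟩
    have h2 := hx'' u hu
    have he := hgpos u
    have hsq : 0 < (x u)^2 := by nlinarith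
    have h3 : g u ≤ (c u * g u * x u - g u * deriv x u) / (x u)^2 := by
      rw [le_div_iff₀ hsq]
      nlinarith [mul_le_mul_of_nonneg_left h2 he.le]
    linarith
  have mono : MonotoneOn (fun v => g v / x v - s v) (Set.Icc 0 b) := by
    apply monotoneOn_of_deriv_nonneg (convex_Icc 0 b)
    · exact fun u hu => ((main u hu).1).continuousAt.continuousWithinAt
    · intro u hu
      rw [interior_Icc] at hu
      exact ((main u (Set.Ioo_subset_Icc_self hu)).1).differentiableAt.differentiableWithinAt
    · intro u hu
      rw [interior_Icc] at hu
      have := main u (Set.Ioo_subset_Icc_self hu)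
      rw [this.1.deriv]
      exact this.2
  have h0m : (0:ℝ) ∈ Set.Icc (0:ℝ) b := ⟨le_refl _, hb⟩
  have := mono h0m ht ht.1
  simp only [hs0, sub_zero] at this
  linarith

/-- focusing lemma for `TCD(0,N)`, `N ≤ 1` or `N = ∞`:
if `x(0) ≤ -δ` and `x' ≤ -x² - 2xf'/(n-1)` wherever `x < 0` on `[0,T)`, then `x < 0`
throughout, the explicit upper bound holds while `s(t)` is below the critical value
`(1/δ)e^{-2f(0)/(n-1)}`, and if `s → ∞` then `x → -∞` at or before the parameter
`t_p` with `s(t_p) = (1/δ)e^{-2f(0)/(n-1)}`. -/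
theorem stmt5 (n : ℕ) (hn : 2 ≤ n) (T : EReal) (hT : 0 < T)
    (f x : ℝ → ℝ) (hf : ContDiff ℝ 1 f)
    (hxd : ∀ t : ℝ, 0 ≤ t → (t : EReal) < T → DifferentiableAt ℝ x t)
    (hx' : ∀ t : ℝ, 0 ≤ t → (t : EReal) < T → x t < 0 →
      deriv x t ≤ -(x t) ^ 2 - 2 * x t * deriv f t / (n - 1))
    (δ : ℝ) (hδ : 0 < δ) (h0 : x 0 ≤ -δ) :
    (∀ t : ℝ, 0 ≤ t → (t : EReal) < T → x t < 0) ∧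
    (∀ t : ℝ, 0 ≤ t → (t : EReal) < T →
      (∫ τ in (0:ℝ)..t, Real.exp (-2 * f τ / (n - 1)))
          < (1 / δ) * Real.exp (-2 * f 0 / (n - 1)) →
      x t ≤ -Real.exp (-2 * f t / (n - 1)) /
        ((1 / δ) * Real.exp (-2 * f 0 / (n - 1))
          - ∫ τ in (0:ℝ)..t, Real.exp (-2 * f τ / (n - 1)))) ∧
    ((∀ C : ℝ, ∃ t : ℝ, 0 ≤ t ∧ (t : EReal) < T ∧
        C ≤ ∫ τ in (0:ℝ)..t, Real.exp (-2 * f τ / (n - 1))) →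
      ∃ t_p : ℝ, 0 < t_p ∧ (t_p : EReal) ≤ T ∧
        (∫ τ in (0:ℝ)..t_p, Real.exp (-2 * f τ / (n - 1)))
          = (1 / δ) * Real.exp (-2 * f 0 / (n - 1)) ∧
        Tendsto x (nhdsWithin t_p (Set.Iio t_p)) atBot) := by
  set g : ℝ → ℝ := fun τ => Real.exp (-2 * f τ / (n - 1)) with hg_def
  set s : ℝ → ℝ := fun t => ∫ τ in (0:ℝ)..t, g τ with hs_def
  set c : ℝ → ℝ := fun u => -2 * deriv f u / (n - 1) with hc_def
  set A : ℝ := (1 / δ) * g 0 with hA_def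
  have hgpos : ∀ u, 0 < g u := fun u => Real.exp_pos _
  have hgder : ∀ u, HasDerivAt g (c u * g u) u := by
    intro u
    have hfd : HasDerivAt f (deriv f u) u :=
      ((hf.differentiable one_ne_zero) u).hasDerivAt
    have h1 : HasDerivAt (fun τ => -2 * f τ / ((n:ℝ) - 1))
        (-2 * deriv f u / ((n:ℝ) - 1)) u := (hfd.const_mul (-2)).div_const _
    simpa [hg_def, hc_def, mul_comm] using h1.exp
  have hgc : Continuous g := by
    have h1 : Continuous fun τ => -2 * f τ / ((n:ℝ) - 1) :=
      (continuous_const.mul hf.continuous).div_const _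
    exact Real.continuous_exp.comp h1
  have hsder : ∀ u, HasDerivAt s (g u) u := by
    intro u
    exact intervalIntegral.integral_hasDerivAt_right (hgc.intervalIntegrable 0 u)
      (hgc.stronglyMeasurableAtFilter _ _) hgc.continuousAt
  have hs0 : s 0 = 0 := intervalIntegral.integral_same
  have hsm : StrictMono s := by
    apply strictMono_of_deriv_pos
    intro u
    rw [(hsder u).deriv]
    exact hgpos u
  have hscont : Continuous s :=
    continuous_iff_continuousAt.mpr fun u => (hsder u).differentiableAt.continuousAt
  have hδ' : -δ < 0 := neg_neg_of_pos hδ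
  have hx0neg : x 0 < 0 := lt_of_le_of_lt h0 hδ'
  have hx''conv : ∀ u : ℝ, 0 ≤ u → (u : EReal) < T → x u < 0 →
      deriv x u ≤ -(x u)^2 + c u * x u := by
    intro u hu0 huT hxu
    have h1 := hx' u hu0 huT hxu
    have heq : -(x u)^2 + c u * x u = -(x u) ^ 2 - 2 * x u * deriv f u / ((n:ℝ) - 1) := by
      simp only [hc_def]; ring
    linarith [heq ▸ h1]
  -- Part 1 : x < 0 on [0, T)
  have hneg : ∀ t : ℝ, 0 ≤ t → (t : EReal) < T → x t < 0 := by
    intro t ht0 htT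
    by_contra hcon
    push_neg at hcon
    have hcontOn : ContinuousOn x (Set.Icc 0 t) := fun u hu =>
      (hxd u hu.1 (lt_of_le_of_lt (EReal.coe_le_coe_iff.mpr hu.2) htT)).continuousAt.continuousWithinAt
    obtain ⟨u, hu, hxu⟩ := intermediate_value_Icc ht0 hcontOn ⟨hx0neg.le, hcon⟩
    set Z : Set ℝ := Set.Icc 0 t ∩ x ⁻¹' {0} with hZ_def
    have hZc : IsClosed Z :=
      hcontOn.preimage_isClosed_of_isClosed isClosed_Icc isClosed_singleton
    have hZcpt : IsCompact Z :=
      isCompact_Icc.of_isClosed_subset hZc Set.inter_subset_left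
    have hZne : Z.Nonempty := ⟨u, hu, hxu⟩
    set t₀ : ℝ := sInf Z with ht₀_def
    have ht₀Z : t₀ ∈ Z := hZcpt.sInf_mem hZne
    have hxt₀ : x t₀ = 0 := ht₀Z.2
    have ht₀Icc : t₀ ∈ Set.Icc 0 t := ht₀Z.1
    have ht₀T : (t₀ : EReal) < T := lt_of_le_of_lt (EReal.coe_le_coe_iff.mpr ht₀Icc.2) htT
    have ht₀pos : 0 < t₀ := by
      rcases lt_or_eq_of_le ht₀Icc.1 with h | h
      · exact h
      · exfalso; rw [← h] at hxt₀; linarith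
    have hbelow : ∀ v ∈ Set.Ico (0:ℝ) t₀, x v < 0 := by
      intro v hv
      rcases lt_trichotomy (x v) 0 with h | h | h
      · exact h
      · exfalso
        have hmem : v ∈ Z := ⟨⟨hv.1, le_trans hv.2.le ht₀Icc.2⟩, h⟩
        exact absurd (csInf_le hZcpt.bddBelow hmem) (not_le.mpr hv.2)
      · exfalso
        have hsub : Set.Icc (0:ℝ) v ⊆ Set.Icc 0 t :=
          Set.Icc_subset_Icc le_rfl (le_trans hv.2.le ht₀Icc.2)
        obtain ⟨w, hw, hxw⟩ := intermediate_value_Icc hv.1 (hcontOn.mono hsub)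
          ⟨hx0neg.le, h.le⟩
        have hmem : w ∈ Z := ⟨hsub hw, hxw⟩
        have h1 := csInf_le hZcpt.bddBelow hmem
        have h2 : t₀ ≤ v := le_trans h1 hw.2
        exact absurd h2 (not_le.mpr hv.2)
    set K : ℝ := g 0 / x 0 with hK_def
    have hK : K < 0 := div_neg_of_pos_of_neg (hgpos 0) hx0neg
    have hev : ∀ᶠ v in nhdsWithin t₀ (Set.Iio t₀), x v ≤ g v / K := by
      filter_upwards [Ioo_mem_nhdsLT_of_mem (Set.mem_Ioc.mpr ⟨ht₀pos, le_rfl⟩)] with v hv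
      have hvT : ∀ w ∈ Set.Icc (0:ℝ) v, (w : EReal) < T := fun w hw =>
        lt_of_le_of_lt (EReal.coe_le_coe_iff.mpr
          (le_trans hw.2 (le_trans hv.2.le ht₀Icc.2))) htT
      have hvneg : ∀ w ∈ Set.Icc (0:ℝ) v, x w < 0 := fun w hw =>
        hbelow w ⟨hw.1, lt_of_le_of_lt hw.2 hv.2⟩
      have hkey := keyA' x g s c v hgpos hgder hsder hs0
        (fun w hw => hxd w hw.1 (hvT w hw))
        hvneg
        (fun w hw => hx''conv w hw.1 (hvT w hw) (hvneg w hw))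
        v ⟨hv.1.le, le_rfl⟩
      have hs_nonneg : 0 ≤ s v :=
        intervalIntegral.integral_nonneg hv.1.le (fun w _ => (hgpos w).le)
      have h1 : K ≤ g v / x v := by rw [hK_def]; linarith
      have h2 : g v ≤ K * x v := (le_div_iff_of_neg (hvneg v ⟨hv.1.le, le_rfl⟩)).mp h1
      exact (le_div_iff_of_neg hK).mpr (by linarith [mul_comm K (x v)])
    have hxt : Tendsto x (nhdsWithin t₀ (Set.Iio t₀)) (nhds 0) := by
      have h1 : Tendsto x (nhdsWithin t₀ (Set.Iio t₀)) (nhds (x t₀)) :=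
        ((hxd t₀ ht₀Icc.1 ht₀T).continuousAt.tendsto).mono_left nhdsWithin_le_nhds
      rwa [hxt₀] at h1
    have hgt : Tendsto (fun v => g v / K) (nhdsWithin t₀ (Set.Iio t₀)) (nhds (g t₀ / K)) :=
      ((hgc.tendsto t₀).mono_left nhdsWithin_le_nhds).div_const _
    have hle : (0:ℝ) ≤ g t₀ / K := le_of_tendsto_of_tendsto hxt hgt hev
    have hlt : g t₀ / K < 0 := div_neg_of_pos_of_neg (hgpos t₀) hK
    linarith
  -- Part 2 : explicit upper bound
  have part2 : ∀ t : ℝ, 0 ≤ t → (t : EReal) < T → s t < A →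
      x t ≤ -g t / (A - s t) := by
    intro t ht0 htT hst
    have hvT : ∀ w ∈ Set.Icc (0:ℝ) t, (w : EReal) < T := fun w hw =>
      lt_of_le_of_lt (EReal.coe_le_coe_iff.mpr hw.2) htT
    have hvneg : ∀ w ∈ Set.Icc (0:ℝ) t, x w < 0 := fun w hw =>
      hneg w hw.1 (hvT w hw)
    have hkey := keyA' x g s c t hgpos hgder hsder hs0
      (fun w hw => hxd w hw.1 (hvT w hw)) hvneg
      (fun w hw => hx''conv w hw.1 (hvT w hw) (hvneg w hw))
      t ⟨ht0, le_rfl⟩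
    have hxt : x t < 0 := hvneg t ⟨ht0, le_rfl⟩
    have hA0 : -A ≤ g 0 / x 0 := by
      rw [le_div_iff_of_neg hx0neg, hA_def]
      have h1 : δ ≤ -x 0 := by linarith
      have h2 : (1/δ) * g 0 * δ ≤ (1/δ) * g 0 * (-x 0) :=
        mul_le_mul_of_nonneg_left h1 (by positivity)
      have h3 : (1/δ) * g 0 * δ = g 0 := by field_simp
      nlinarith
    have h1 : -(A - s t) ≤ g t / x t := by linarith
    have h2 : g t ≤ -(A - s t) * x t := (le_div_iff_of_neg hxt).mp h1
    have hP : 0 < A - s t := by linarith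
    rw [neg_div, le_neg, div_le_iff₀ hP]
    nlinarith
  refine ⟨hneg, part2, ?_⟩
  -- Part 3
  intro h
  have hApos : 0 < A := by rw [hA_def]; positivity
  obtain ⟨t₁, ht₁0, ht₁T, ht₁s⟩ := h (A + 1)
  have hAmem : A ∈ Set.Icc (s 0) (s t₁) := by
    constructor
    · rw [hs0]; linarith
    · exact le_trans (by linarith) ht₁s
  obtain ⟨t_p, htpmem, htps⟩ := intermediate_value_Icc ht₁0 hscont.continuousOn hAmem
  have htppos : 0 < t_p := by
    rcases lt_or_eq_of_le htpmem.1 with h' | h'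
    · exact h'
    · exfalso; rw [← h', hs0] at htps; linarith
  have htpT : (t_p : EReal) ≤ T :=
    le_of_lt (lt_of_le_of_lt (EReal.coe_le_coe_iff.mpr htpmem.2) ht₁T)
  refine ⟨t_p, htppos, htpT, htps, ?_⟩
  have hd : Tendsto (fun u => A - s u) (nhdsWithin t_p (Set.Iio t_p))
      (nhdsWithin 0 (Set.Ioi 0)) := by
    rw [tendsto_nhdsWithin_iff]
    constructor
    · have h1 : Tendsto s (nhdsWithin t_p (Set.Iio t_p)) (nhds (s t_p)) :=
        (hscont.tendsto t_p).mono_left nhdsWithin_le_nhds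
      have h2 : Tendsto (fun u => A - s u) (nhdsWithin t_p (Set.Iio t_p))
          (nhds (A - s t_p)) := (tendsto_const_nhds (x := A)).sub h1
      rwa [htps, sub_self] at h2
    · filter_upwards [self_mem_nhdsWithin] with u hu
      have h1 : s u < s t_p := hsm hu
      rw [htps] at h1
      exact Set.mem_Ioi.mpr (by linarith)
  have hinv : Tendsto (fun u => (A - s u)⁻¹) (nhdsWithin t_p (Set.Iio t_p)) atTop :=
    hd.inv_tendsto_nhdsGT_zero
  have hgtp : Tendsto g (nhdsWithin t_p (Set.Iio t_p)) (nhds (g t_p)) :=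
    (hgc.tendsto t_p).mono_left nhdsWithin_le_nhds
  have hmul : Tendsto (fun u => g u * (A - s u)⁻¹) (nhdsWithin t_p (Set.Iio t_p)) atTop :=
    hgtp.pos_mul_atTop (hgpos t_p) hinv
  have hbt : Tendsto (fun u => -(g u / (A - s u))) (nhdsWithin t_p (Set.Iio t_p)) atBot := by
    simp only [div_eq_mul_inv]
    exact tendsto_neg_atBot_iff.mpr hmul
  apply tendsto_atBot_mono' _ _ hbt
  filter_upwards [Ioo_mem_nhdsLT_of_mem (Set.mem_Ioc.mpr ⟨htppos, le_rfl⟩)] with u hu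
  have huT : (u : EReal) < T :=
    lt_of_le_of_lt (EReal.coe_le_coe_iff.mpr (le_trans hu.2.le htpmem.2)) ht₁T
  have hsu : s u < A := by
    have h1 : s u < s t_p := hsm hu.2
    rwa [htps] at h1
  have hfin := part2 u hu.1.le huT hsu
  rwa [neg_div] at hfin
end

section
/- Let δ > 0 and let y : [0,S) → ℝ be differentiable with y(0) ≤ -(1+δ) and y' ≤ 1 - y² on [0,S). Set s_p := arctanh(1/(1+δ)). Then y(s) ≤ -coth(s_p - s) for all s ∈ [0, min(S, s_p)); in particular y(s) < -1 throughout and y(s) → -∞ as s approaches some s* ≤ s_p if S > s_p. -/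
open Real Filter Topology

noncomputable def arctanh (x : ℝ) : ℝ := (1 / 2) * Real.log ((1 + x) / (1 - x))

noncomputable def coth (x : ℝ) : ℝ := Real.cosh x / Real.sinh x

lemma coth_gt_one {t : ℝ} (ht : 0 < t) : 1 < coth t := by
  have hs : 0 < Real.sinh t := Real.sinh_pos_iff.mpr ht
  rw [coth, lt_div_iff₀ hs, one_mul]
  exact Real.sinh_lt_cosh t

lemma coth_anti {a b : ℝ} (ha : 0 < a) (hab : a ≤ b) : coth b ≤ coth a := by
  have hsa : 0 < Real.sinh a := Real.sinh_pos_iff.mpr ha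
  have hsb : 0 < Real.sinh b := Real.sinh_pos_iff.mpr (ha.trans_le hab)
  rw [coth, coth, div_le_div_iff₀ hsb hsa]
  have h1 : 0 ≤ Real.sinh (b - a) := Real.sinh_nonneg_iff.mpr (by linarith)
  rw [Real.sinh_sub] at h1
  nlinarith

lemma hasDerivAt_coth {t : ℝ} (ht : Real.sinh t ≠ 0) :
    HasDerivAt coth (1 - coth t ^ 2) t := by
  have h := (Real.hasDerivAt_cosh t).div (Real.hasDerivAt_sinh t) ht
  have he : (Real.sinh t * Real.sinh t - Real.cosh t * Real.cosh t) / Real.sinh t ^ 2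
      = 1 - coth t ^ 2 := by
    rw [coth, div_pow]
    have h2 : Real.sinh t ^ 2 ≠ 0 := pow_ne_zero 2 ht
    field_simp
  rw [← he]
  exact h

lemma arctanh_pos {u : ℝ} (h0 : 0 < u) (h1 : u < 1) : 0 < arctanh u := by
  rw [arctanh]
  have hr : 1 < (1 + u) / (1 - u) := by
    rw [lt_div_iff₀ (by linarith)]; linarith
  exact mul_pos (by norm_num) (Real.log_pos hr)

lemma coth_arctanh {u : ℝ} (h0 : 0 < u) (h1 : u < 1) : coth (arctanh u) = 1 / u := by
  have hsp := arctanh_pos h0 h1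
  have hs : 0 < Real.sinh (arctanh u) := Real.sinh_pos_iff.mpr hsp
  have hexp : Real.exp (arctanh u) * Real.exp (arctanh u) = (1 + u) / (1 - u) := by
    rw [← Real.exp_add, arctanh,
      show (1/2 : ℝ) * Real.log ((1+u)/(1-u)) + (1/2) * Real.log ((1+u)/(1-u))
        = Real.log ((1+u)/(1-u)) by ring]
    exact Real.exp_log (div_pos (by linarith) (by linarith))
  have he : (0:ℝ) < Real.exp (arctanh u) := Real.exp_pos _
  have h1u : (1:ℝ) - u ≠ 0 := by linarith
  rw [coth, div_eq_div_iff hs.ne' h0.ne']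
  rw [Real.cosh_eq, Real.sinh_eq, Real.exp_neg]
  rw [eq_div_iff h1u] at hexp
  field_simp
  nlinarith [hexp]

/-- main comparison lemma -/
lemma riccati_key {S : EReal} {y y' : ℝ → ℝ} {sp : ℝ}
    (hy : ∀ s : ℝ, 0 ≤ s → (s : EReal) < S → HasDerivAt y (y' s) s)
    (hy' : ∀ s : ℝ, 0 ≤ s → (s : EReal) < S → y' s ≤ 1 - (y s) ^ 2)
    (h0 : y 0 ≤ -coth sp)
    {s₀ : ℝ} (hs₀ : 0 ≤ s₀) (hs₀S : (s₀ : EReal) < S) (hs₀p : s₀ < sp) :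
    y s₀ ≤ -coth (sp - s₀) := by
  have hC1 : 1 < coth (sp - s₀) := coth_gt_one (by linarith)
  set K : ℝ := 2 * coth (sp - s₀) + 2 with hK
  have hKpos : 0 < K := by rw [hK]; linarith
  have key : ∀ ε : ℝ, 0 < ε → ε * Real.exp (K * s₀) ≤ 1 →
      y s₀ ≤ -coth (sp - s₀) + ε * Real.exp (K * s₀) := by
    intro ε hε hεK
    set B : ℝ → ℝ := fun x => -coth (sp - x) + ε * Real.exp (K * x) with hB
    set B' : ℝ → ℝ :=
      fun x => -((1 - coth (sp - x) ^ 2) * (-1)) + ε * (Real.exp (K * x) * K) with hB'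
    have hmemS : ∀ x ∈ Set.Icc (0:ℝ) s₀, (x : EReal) < S := fun x hx =>
      lt_of_le_of_lt (EReal.coe_le_coe_iff.mpr hx.2) hs₀S
    have hf : ContinuousOn y (Set.Icc 0 s₀) := fun x hx =>
      ((hy x hx.1 (hmemS x hx)).continuousAt).continuousWithinAt
    have hf' : ∀ x ∈ Set.Ico (0:ℝ) s₀, HasDerivWithinAt y (y' x) (Set.Ici x) x :=
      fun x hx => (hy x hx.1 (hmemS x ⟨hx.1, hx.2.le⟩)).hasDerivWithinAt
    have hBd : ∀ x ∈ Set.Icc (0:ℝ) s₀, HasDerivAt B (B' x) x := by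
      intro x hx
      have hspx : 0 < sp - x := by linarith [hx.2]
      have hsx : Real.sinh (sp - x) ≠ 0 := (Real.sinh_pos_iff.mpr hspx).ne'
      have h1a : HasDerivAt (fun x : ℝ => sp - x) (-1) x := by
        simpa using (hasDerivAt_id x).const_sub sp
      have h1 : HasDerivAt (fun x : ℝ => coth (sp - x))
          ((1 - coth (sp - x) ^ 2) * (-1)) x := (hasDerivAt_coth hsx).comp x h1a
      have h2a : HasDerivAt (fun x : ℝ => K * x) K x := by
        simpa using (hasDerivAt_id x).const_mul K
      have h2b : HasDerivAt (fun x : ℝ => Real.exp (K * x)) (Real.exp (K * x) * K) x :=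
        (Real.hasDerivAt_exp (K * x)).comp x h2a
      exact h1.neg.add (h2b.const_mul ε)
    have ha : y 0 ≤ B 0 := by
      simp only [hB, sub_zero, mul_zero, Real.exp_zero, mul_one]
      linarith
    have bound : ∀ x ∈ Set.Ico (0:ℝ) s₀, y x = B x → y' x < B' x := by
      intro x hx hyx
      have hxS : (x : EReal) < S := hmemS x ⟨hx.1, hx.2.le⟩
      have h1 : y' x ≤ 1 - (y x) ^ 2 := hy' x hx.1 hxS
      have hcle : coth (sp - x) ≤ coth (sp - s₀) :=
        coth_anti (by linarith) (by linarith [hx.2.le])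
      have hc1 : 1 < coth (sp - x) := coth_gt_one (by linarith [hx.2])
      have hepos : (0:ℝ) < Real.exp (K * x) := Real.exp_pos _
      have hE : 0 < ε * Real.exp (K * x) := by positivity
      have hE1 : ε * Real.exp (K * x) ≤ 1 := by
        have hle : Real.exp (K * x) ≤ Real.exp (K * s₀) :=
          Real.exp_le_exp.mpr (by nlinarith [hx.2.le])
        nlinarith
      simp only [hB] at hyx
      simp only [hB']
      rw [hyx] at h1
      have hfac : 0 < (ε * Real.exp (K * x)) *
          (K - 2 * coth (sp - x) + ε * Real.exp (K * x)) :=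
        mul_pos hE (by rw [hK]; linarith)
      nlinarith [h1, hfac]
    have hres := image_le_of_deriv_right_lt_deriv_boundary' hf hf' ha
      (fun x hx => (hBd x hx).continuousAt.continuousWithinAt)
      (fun x hx => (hBd x ⟨hx.1, hx.2.le⟩).hasDerivWithinAt) bound
      (Set.right_mem_Icc.mpr hs₀)
    simpa only [hB] using hres
  by_contra hcon
  push_neg at hcon
  have hd0 : 0 < y s₀ - (-coth (sp - s₀)) := by linarith
  set d := y s₀ - (-coth (sp - s₀)) with hd
  have hE0 : 0 < Real.exp (K * s₀) := Real.exp_pos _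
  set ε := min (1 / Real.exp (K * s₀)) (d / (2 * Real.exp (K * s₀))) with hε
  have hε0 : 0 < ε := lt_min (by positivity) (by positivity)
  have h1 : ε * Real.exp (K * s₀) ≤ 1 := by
    calc ε * Real.exp (K * s₀) ≤ (1 / Real.exp (K * s₀)) * Real.exp (K * s₀) :=
          mul_le_mul_of_nonneg_right (min_le_left _ _) hE0.le
      _ = 1 := by field_simp
  have h2 : ε * Real.exp (K * s₀) ≤ d / 2 := by
    calc ε * Real.exp (K * s₀) ≤ (d / (2 * Real.exp (K * s₀))) * Real.exp (K * s₀) :=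
          mul_le_mul_of_nonneg_right (min_le_right _ _) hE0.le
      _ = d / 2 := by field_simp
  have := key ε hε0 h1
  linarith

/-- Riccati comparison with `-coth`: if `y(0) ≤ -(1+δ)` and
`y' ≤ 1 - y²` on `[0,S)`, with `s_p = arctanh(1/(1+δ))`, then
`y(s) ≤ -coth(s_p - s)` on `[0, min(S, s_p))`, in particular `y < -1` there,
and `y → -∞` at or before `s_p` if `S > s_p`. -/
theorem stmt7 (δ : ℝ) (hδ : 0 < δ) (S : EReal) (hS : 0 < S) (y y' : ℝ → ℝ)
    (hy : ∀ s : ℝ, 0 ≤ s → (s : EReal) < S → HasDerivAt y (y' s) s)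
    (hy' : ∀ s : ℝ, 0 ≤ s → (s : EReal) < S → y' s ≤ 1 - (y s) ^ 2)
    (h0 : y 0 ≤ -(1 + δ)) :
    (∀ s : ℝ, 0 ≤ s → (s : EReal) < S → s < arctanh (1 / (1 + δ)) →
      y s ≤ -coth (arctanh (1 / (1 + δ)) - s) ∧ y s < -1) ∧
    (((arctanh (1 / (1 + δ)) : ℝ) : EReal) < S →
      ∃ sstar : ℝ, 0 < sstar ∧ sstar ≤ arctanh (1 / (1 + δ)) ∧
        Tendsto y (nhdsWithin sstar (Set.Iio sstar)) atBot) := by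
  have hu0 : (0:ℝ) < 1 / (1 + δ) := by positivity
  have hu1 : 1 / (1 + δ) < 1 := by
    rw [div_lt_one (by linarith)]; linarith
  set sp := arctanh (1 / (1 + δ)) with hsp
  have hsppos : 0 < sp := arctanh_pos hu0 hu1
  have hcsp : coth sp = 1 + δ := by
    rw [hsp, coth_arctanh hu0 hu1, one_div_one_div]
  have h0' : y 0 ≤ -coth sp := by rw [hcsp]; exact h0
  have main : ∀ s : ℝ, 0 ≤ s → (s : EReal) < S → s < sp → y s ≤ -coth (sp - s) :=
    fun s hs hsS hssp => riccati_key hy hy' h0' hs hsS hssp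
  constructor
  · intro s hs hsS hssp
    have h1 := main s hs hsS hssp
    have h2 : 1 < coth (sp - s) := coth_gt_one (by linarith)
    exact ⟨h1, by linarith⟩
  · intro hspS
    refine ⟨sp, hsppos, le_refl _, ?_⟩
    have hmono : ∀ᶠ s in 𝓝[<] sp, y s ≤ -coth (sp - s) := by
      filter_upwards [Ioo_mem_nhdsLT_of_mem
        (Set.mem_Ioc.mpr ⟨hsppos, le_refl sp⟩ : sp ∈ Set.Ioc 0 sp)] with s hs
      have hsS : (s : EReal) < S :=
        lt_trans (EReal.coe_lt_coe_iff.mpr hs.2) hspS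
      exact main s hs.1.le hsS hs.2
    have h1 : Tendsto (fun s => sp - s) (𝓝[<] sp) (𝓝[>] (0:ℝ)) := by
      apply tendsto_nhdsWithin_of_tendsto_nhds_of_eventually_within
      · have h : Tendsto (fun s : ℝ => sp - s) (𝓝 sp) (𝓝 (sp - sp)) :=
          (continuous_const.sub continuous_id).tendsto sp
        rw [sub_self] at h
        exact h.mono_left nhdsWithin_le_nhds
      · filter_upwards [self_mem_nhdsWithin] with s hs
        exact Set.mem_Ioi.mpr (sub_pos.mpr hs)
    have h2 : Tendsto Real.sinh (𝓝[>] (0:ℝ)) (𝓝[>] (0:ℝ)) := by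
      apply tendsto_nhdsWithin_of_tendsto_nhds_of_eventually_within
      · have h := Real.continuous_sinh.tendsto 0
        rw [Real.sinh_zero] at h
        exact h.mono_left nhdsWithin_le_nhds
      · filter_upwards [self_mem_nhdsWithin] with t ht
        exact Set.mem_Ioi.mpr (Real.sinh_pos_iff.mpr ht)
    have h3 : Tendsto (fun t => (Real.sinh t)⁻¹) (𝓝[>] (0:ℝ)) atTop :=
      tendsto_inv_nhdsGT_zero.comp h2
    have h4 : Tendsto Real.cosh (𝓝[>] (0:ℝ)) (𝓝 1) := by
      have h := Real.continuous_cosh.tendsto 0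
      rw [Real.cosh_zero] at h
      exact h.mono_left nhdsWithin_le_nhds
    have h5 : Tendsto coth (𝓝[>] (0:ℝ)) atTop := by
      have := Filter.Tendsto.pos_mul_atTop one_pos h4 h3
      exact Filter.Tendsto.congr (fun x => by simp only [coth, div_eq_mul_inv]) this
    have h6 : Tendsto (fun s => coth (sp - s)) (𝓝[<] sp) atTop := h5.comp h1
    have h7 : Tendsto (fun s => -coth (sp - s)) (𝓝[<] sp) atBot :=
      tendsto_neg_atTop_atBot.comp h6
    exact tendsto_atBot_mono' _ hmono h7
end
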